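/- Let f(x_1,...,x_r) be a polynomial with non-negative real coefficients and let s be a positive real number. If the integral ∫_{[1,∞)^r} f(x̄)^{-s} dx̄ is finite, then the multivariate series ∑_{x̄∈ℕ^r, x_i≥1} f(x̄)^{-s} converges; moreover every partial sum ∑_{x̄=1}^N f(x̄)^{-s} is bounded by (2^{κrs}+1)·∫_{[1,∞)^r} f(x̄)^{-s} dx̄, where κ is the total degree of f. -/

import Mathlib

open MvPolynomial MeasureTheory Set

private lemma mvpoly_eval_nonneg {r : ℕ} (f : MvPolynomial (Fin r) ℝ)
    (hnn : ∀ m, 0 ≤ f.coeff m) {x : Fin r → ℝ} (hx : ∀ i, 0 ≤ x i) :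
    0 ≤ eval x f := by
  rw [eval_eq']
  exact Finset.sum_nonneg fun d _ => mul_nonneg (hnn d)
    (Finset.prod_nonneg fun i _ => pow_nonneg (hx i) _)

private lemma mvpoly_eval_mono {r : ℕ} (f : MvPolynomial (Fin r) ℝ)
    (hnn : ∀ m, 0 ≤ f.coeff m) {x y : Fin r → ℝ} (hx : ∀ i, 0 ≤ x i)
    (hxy : ∀ i, x i ≤ y i) : eval x f ≤ eval y f := by
  rw [eval_eq', eval_eq']
  refine Finset.sum_le_sum fun d _ => mul_le_mul_of_nonneg_left ?_ (hnn d)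
  exact Finset.prod_le_prod (fun i _ => pow_nonneg (hx i) _)
    (fun i _ => pow_le_pow_left₀ (hx i) (hxy i) _)

private lemma mvpoly_eval_double {r : ℕ} (f : MvPolynomial (Fin r) ℝ)
    (hnn : ∀ m, 0 ≤ f.coeff m) {x : Fin r → ℝ} (hx : ∀ i, 0 ≤ x i) :
    eval (fun i => 2 * x i) f ≤ 2 ^ f.totalDegree * eval x f := by
  rw [eval_eq', eval_eq', Finset.mul_sum]
  refine Finset.sum_le_sum fun d hd => ?_
  have h1 : (∏ i, (2 * x i) ^ d i) = 2 ^ (∑ i, d i) * ∏ i, x i ^ d i := by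
    rw [← Finset.prod_pow_eq_pow_sum, ← Finset.prod_mul_distrib]
    exact Finset.prod_congr rfl fun i _ => mul_pow _ _ _
  have h2 : (∑ i, d i) ≤ f.totalDegree := by
    have : (∑ i, d i) = d.sum fun _ e => e := (Finsupp.sum_fintype d (fun _ e => e) fun _ => rfl).symm
    rw [this]
    exact le_totalDegree hd
  have h3 : (2:ℝ) ^ (∑ i, d i) ≤ 2 ^ f.totalDegree :=
    pow_le_pow_right₀ one_le_two h2
  have h4 : (0:ℝ) ≤ ∏ i, x i ^ d i :=
    Finset.prod_nonneg fun i _ => pow_nonneg (hx i) _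
  calc f.coeff d * ∏ i, (2 * x i) ^ d i
      = 2 ^ (∑ i, d i) * (f.coeff d * ∏ i, x i ^ d i) := by rw [h1]; ring
    _ ≤ 2 ^ f.totalDegree * (f.coeff d * ∏ i, x i ^ d i) :=
        mul_le_mul_of_nonneg_right h3 (mul_nonneg (hnn d) h4)

/-- Integral test for multivariate Dirichlet-type series of polynomials. -/
theorem mellin_series_integral_test {r : ℕ} (f : MvPolynomial (Fin r) ℝ)
    (hnn : ∀ m, 0 ≤ f.coeff m) (s : ℝ) (hs : 0 < s)
    (hint : IntegrableOn (fun x : Fin r → ℝ => (MvPolynomial.eval x f) ^ (-s))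
      (Set.univ.pi fun _ => Set.Ici (1 : ℝ))) :
    Summable (fun x : Fin r → ℕ+ =>
        (MvPolynomial.eval (fun i => ((x i : ℕ) : ℝ)) f) ^ (-s)) ∧
    ∀ N : ℕ,
      ∑ x ∈ Finset.Icc (fun _ => 1 : Fin r → ℕ) (fun _ => N),
          (MvPolynomial.eval (fun i => ((x i : ℕ) : ℝ)) f) ^ (-s) ≤
        ((2 : ℝ) ^ (((f.totalDegree : ℝ) * r) * s) + 1) *
          ∫ x in Set.univ.pi fun _ => Set.Ici (1 : ℝ),
            (MvPolynomial.eval x f) ^ (-s) := by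
  classical
  set κ := f.totalDegree with hκ
  set S : Set (Fin r → ℝ) := Set.univ.pi fun _ => Set.Ici (1 : ℝ) with hS
  set g : (Fin r → ℝ) → ℝ := fun x => (MvPolynomial.eval x f) ^ (-s) with hg
  set C : ℝ := ((2:ℝ) ^ κ) ^ s with hC
  have hSmeas : MeasurableSet S := MeasurableSet.univ_pi fun _ => measurableSet_Ici
  have hgS : ∀ x ∈ S, 0 ≤ g x := by
    intro x hx
    exact Real.rpow_nonneg (mvpoly_eval_nonneg f hnn fun i =>
      le_trans zero_le_one (hx i (Set.mem_univ i))) _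
  -- cells
  set cell : (Fin r → ℕ) → Set (Fin r → ℝ) :=
    fun n => Set.univ.pi fun i => Set.Ico (n i : ℝ) ((n i : ℝ) + 1) with hcell
  have hcellmeas : ∀ n, MeasurableSet (cell n) :=
    fun n => MeasurableSet.univ_pi fun _ => measurableSet_Ico
  have hvol : ∀ n, volume (cell n) = 1 := by
    intro n
    rw [hcell, volume_pi_pi]
    simp
  have hsub : ∀ n : Fin r → ℕ, (∀ i, 1 ≤ n i) → cell n ⊆ S := by
    intro n hn y hy i _
    have := (hy i (Set.mem_univ i)).1
    have h1 : (1:ℝ) ≤ (n i : ℝ) := by exact_mod_cast hn i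
    exact le_trans h1 this
  have hdisj : ∀ a b : Fin r → ℕ, a ≠ b → Disjoint (cell a) (cell b) := by
    intro a b hab
    obtain ⟨i, hi⟩ := Function.ne_iff.mp hab
    rw [Set.disjoint_left]
    intro y hya hyb
    have h1 := hya i (Set.mem_univ i)
    have h2 := hyb i (Set.mem_univ i)
    have hab' : (a i : ℝ) < (b i : ℝ) + 1 := lt_of_le_of_lt h1.1 h2.2
    have hba' : (b i : ℝ) < (a i : ℝ) + 1 := lt_of_le_of_lt h2.1 h1.2
    have : a i < b i + 1 := by exact_mod_cast hab'
    have : b i < a i + 1 := by exact_mod_cast hba'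
    omega
  have Cnn : (0:ℝ) ≤ C := Real.rpow_nonneg (by positivity) _
  -- key pointwise bound
  have key : ∀ n : Fin r → ℕ, (∀ i, 1 ≤ n i) →
      (MvPolynomial.eval (fun i => (n i : ℝ)) f) ^ (-s) ≤ C * ∫ x in cell n, g x := by
    intro n hn
    have hn0 : ∀ i, (0:ℝ) ≤ (n i : ℝ) := fun i => Nat.cast_nonneg _
    have hintcell : IntegrableOn g (cell n) := hint.mono_set (hsub n hn)
    have hcellnn : ∀ x ∈ cell n, 0 ≤ g x := fun x hx => hgS x (hsub n hn hx)
    have intnn : 0 ≤ ∫ x in cell n, g x :=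
      setIntegral_nonneg (hcellmeas n) hcellnn
    set A : ℝ := MvPolynomial.eval (fun i => (n i : ℝ)) f with hA
    have hAnn : 0 ≤ A := mvpoly_eval_nonneg f hnn hn0
    rcases eq_or_lt_of_le hAnn with hA0 | hApos
    · rw [← hA0, Real.zero_rpow (by linarith)]
      exact mul_nonneg Cnn intnn
    · -- on the cell, g x ≥ (2^κ * A)^(-s)
      have hconst : ∀ x ∈ cell n, ((2:ℝ) ^ κ * A) ^ (-s) ≤ g x := by
        intro x hx
        have hx1 : ∀ i, (n i : ℝ) ≤ x i := fun i => (hx i (Set.mem_univ i)).1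
        have hx2 : ∀ i, x i ≤ 2 * (n i : ℝ) := by
          intro i
          have := (hx i (Set.mem_univ i)).2
          have h1 : (1:ℝ) ≤ (n i : ℝ) := by exact_mod_cast hn i
          linarith
        have hxnn : ∀ i, (0:ℝ) ≤ x i := fun i => le_trans (hn0 i) (hx1 i)
        have e1 : A ≤ MvPolynomial.eval x f := mvpoly_eval_mono f hnn hn0 hx1
        have e2 : MvPolynomial.eval x f ≤ 2 ^ κ * A := by
          calc MvPolynomial.eval x f ≤ MvPolynomial.eval (fun i => 2 * (n i : ℝ)) f :=
                mvpoly_eval_mono f hnn hxnn hx2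
            _ ≤ 2 ^ κ * A := mvpoly_eval_double f hnn hn0
        exact Real.rpow_le_rpow_of_nonpos (lt_of_lt_of_le hApos e1) e2 (by linarith)
      have hb := setIntegral_ge_of_const_le_real (hcellmeas n)
        (by rw [hvol n]; exact ENNReal.one_ne_top) hconst hintcell
      rw [measureReal_def, hvol n] at hb
      simp only [ENNReal.toReal_one, mul_one] at hb
      have hmul : ((2:ℝ) ^ κ * A) ^ (-s) = ((2:ℝ) ^ κ) ^ (-s) * A ^ (-s) :=
        Real.mul_rpow (by positivity) hAnn
      rw [hmul] at hb
      have hCC : C * ((2:ℝ) ^ κ) ^ (-s) = 1 := by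
        rw [hC, ← Real.rpow_add (by positivity)]
        simp
      calc A ^ (-s) = C * (((2:ℝ) ^ κ) ^ (-s) * A ^ (-s)) := by
            rw [← mul_assoc, hCC, one_mul]
        _ ≤ C * ∫ x in cell n, g x := mul_le_mul_of_nonneg_left hb Cnn
  -- the master finite-sum bound
  have Inn : 0 ≤ ∫ x in S, g x := setIntegral_nonneg hSmeas hgS
  have main : ∀ T : Finset (Fin r → ℕ), (∀ n ∈ T, ∀ i, 1 ≤ n i) →
      ∑ n ∈ T, (MvPolynomial.eval (fun i => (n i : ℝ)) f) ^ (-s) ≤ C * ∫ x in S, g x := by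
    intro T hT
    have hintT : ∀ n ∈ T, IntegrableOn g (cell n) :=
      fun n hnT => hint.mono_set (hsub n (hT n hnT))
    have hdisjT : Set.Pairwise ↑T (Function.onFun Disjoint cell) :=
      fun a _ b _ hab => hdisj a b hab
    have hUsub : (⋃ n ∈ T, cell n) ⊆ S :=
      Set.iUnion₂_subset fun n hnT => hsub n (hT n hnT)
    calc ∑ n ∈ T, (MvPolynomial.eval (fun i => (n i : ℝ)) f) ^ (-s)
        ≤ ∑ n ∈ T, C * ∫ x in cell n, g x :=
          Finset.sum_le_sum fun n hnT => key n (hT n hnT)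
      _ = C * ∑ n ∈ T, ∫ x in cell n, g x := by rw [Finset.mul_sum]
      _ = C * ∫ x in ⋃ n ∈ T, cell n, g x := by
          rw [integral_biUnion_finset T (fun n _ => hcellmeas n) hdisjT hintT]
      _ ≤ C * ∫ x in S, g x := by
          refine mul_le_mul_of_nonneg_left ?_ Cnn
          refine setIntegral_mono_set hint ?_ (HasSubset.Subset.eventuallyLE hUsub)
          exact ae_restrict_of_forall_mem hSmeas hgS
  -- comparison of constants
  have hCle : C ≤ (2 : ℝ) ^ (((κ : ℝ) * r) * s) + 1 := by
    have hC' : C = (2:ℝ) ^ ((κ:ℝ) * s) := by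
      rw [hC, ← Real.rpow_natCast 2 κ, ← Real.rpow_mul (by norm_num)]
    rcases Nat.eq_zero_or_pos r with hr | hr
    · have hκ0 : κ = 0 := by
        rw [hκ]
        refine Nat.le_zero.mp (Finset.sup_le fun d hd => ?_)
        have : d.support = ∅ := by
          subst hr
          exact Finset.eq_empty_of_isEmpty _
        simp [Finsupp.sum, this]
      rw [hC', hκ0]
      norm_num
    · rw [hC']
      have h1 : (κ:ℝ) * s ≤ ((κ:ℝ) * r) * s := by
        have : (1:ℝ) ≤ (r:ℝ) := Nat.one_le_cast.mpr hr
        nlinarith [mul_nonneg (mul_nonneg (Nat.cast_nonneg κ : (0:ℝ) ≤ (κ:ℝ)) hs.le) (by linarith : (0:ℝ) ≤ (r:ℝ) - 1)]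
      have := Real.rpow_le_rpow_of_exponent_le (by norm_num : (1:ℝ) ≤ 2) h1
      linarith
  constructor
  · -- summability
    refine summable_of_sum_le (c := C * ∫ x in S, g x) ?_ ?_
    · intro x
      exact Real.rpow_nonneg (mvpoly_eval_nonneg f hnn fun i => Nat.cast_nonneg _) _
    · intro u
      have hinj : Set.InjOn (fun x : Fin r → ℕ+ => fun i => (x i : ℕ)) ↑u := by
        intro x _ y _ hxy
        funext i
        exact PNat.coe_injective (congrFun hxy i)
      refine le_trans (le_of_eq ?_)
        (main (u.image (fun x : Fin r → ℕ+ => fun i => (x i : ℕ))) ?_)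
      · exact (Finset.sum_image (s := u)
          (g := fun x : Fin r → ℕ+ => fun i => (x i : ℕ))
          (f := fun n : Fin r → ℕ => (MvPolynomial.eval (fun i => ((n i : ℕ) : ℝ)) f) ^ (-s))
          (fun x hx y hy hxy => hinj hx hy hxy)).symm
      · intro n hn i
        simp only [Finset.mem_image] at hn
        obtain ⟨x, _, rfl⟩ := hn
        exact (x i).one_le
  · intro N
    have hmain := main (Finset.Icc (fun _ => 1) (fun _ => N)) ?_
    · refine le_trans hmain ?_
      exact mul_le_mul_of_nonneg_right hCle Inn
    · intro n hn i
      exact (Finset.mem_Icc.mp hn).1 i
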